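/- Fix a countable relational language L with relation symbols R_i of arity a_i (i ∈ ℕ), and let X := ∏_{i∈ℕ} Bool^{(Fin a_i → ℕ)} be the Polish space of L-structures with domain ℕ (product topology, Bool discrete), equipped with its Borel σ-algebra. Then there exists a Borel-measurable function f: X → ℝ such that for all ω-categorical x, y ∈ X: x and y are fo-bi-definable (i.e., there exists a bijection θ: ℕ → ℕ with Aut(y) = {θ∘g∘θ⁻¹ : g ∈ Aut(x)}) if and only if f(x) = f(y). In other words, fo-bi-definability is smooth on the class of ω-categorical structures. -/

import Mathlib

/-- The topology of pointwise convergence on functions `α → β`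
(product topology with `β` discrete). -/
def FnTop (α β : Type*) : TopologicalSpace (α → β) :=
  @Pi.topologicalSpace α (fun _ => β) (fun _ => ⊥)

/-- The coordinatewise action of a permutation on tuples. -/
def tAct {Ω : Type*} (g : Equiv.Perm Ω) {n : ℕ} (u : Fin n → Ω) : Fin n → Ω :=
  fun i => g (u i)

/-- The action of a permutation on sets of tuples. -/
def sAct {Ω : Type*} (g : Equiv.Perm Ω) {n : ℕ} (c : Set (Fin n → Ω)) : Set (Fin n → Ω) :=
  tAct g '' c

/-- A set of permutations is oligomorphic if for every `n` its coordinatewise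
action on `n`-tuples has finitely many orbits. -/
def Oligo {Ω : Type*} (G : Set (Equiv.Perm Ω)) : Prop :=
  ∀ n : ℕ, Set.Finite {o : Set (Fin n → Ω) | ∃ t : Fin n → Ω, o = {s | ∃ g ∈ G, s = tAct g t}}

/-- `G` acts without algebraicity on `Ω`: if the orbit of `a` under the pointwise
stabiliser of a finite tuple `y` is finite, then `a` is an entry of `y`. -/
def NoAlg {Ω : Type*} (G : Set (Equiv.Perm Ω)) : Prop :=
  ∀ (m : ℕ) (y : Fin m → Ω) (a : Ω),
    Set.Finite {b : Ω | ∃ g ∈ G, (∀ i, g (y i) = y i) ∧ b = g a} → ∃ i, a = y i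

/-- `G` is topologically closed in the space of permutations with the topology of
pointwise convergence. -/
def TopClosedPerm {Ω : Type*} (G : Set (Equiv.Perm Ω)) : Prop :=
  @IsClosed (Ω → Ω) (FnTop Ω Ω) {f | ∃ g ∈ G, f = ⇑g}

/-- The `r`-equivalence class of a tuple `u ∈ U`. -/
def cls {Ω : Type*} {n : ℕ} (U : Set (Fin n → Ω))
    (r : (Fin n → Ω) → (Fin n → Ω) → Prop) (u : Fin n → Ω) : Set (Fin n → Ω) :=
  {v ∈ U | r u v}

/-- The quotient `B = U/∼`, realised as the set of equivalence classes. -/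
def classes {Ω : Type*} {n : ℕ} (U : Set (Fin n → Ω))
    (r : (Fin n → Ω) → (Fin n → Ω) → Prop) : Set (Set (Fin n → Ω)) :=
  {c | ∃ u ∈ U, c = cls U r u}

/-- `a` entangles the class `c` if `a` is an entry of every tuple in `c`. -/
def Entangles {Ω : Type*} {n : ℕ} (a : Ω) (c : Set (Fin n → Ω)) : Prop :=
  ∀ v ∈ c, ∃ i, v i = a

/-- `a` strongly entangles `c ∈ B` if it entangles `c` and no other element of `B`. -/
def StronglyEntangles {Ω : Type*} {n : ℕ} (B : Set (Set (Fin n → Ω))) (a : Ω)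
    (c : Set (Fin n → Ω)) : Prop :=
  Entangles a c ∧ ∀ c' ∈ B, Entangles a c' → c' = c

/-- `a` is algebraic over `c`: the orbit of `a` under the stabiliser `G_c` is finite. -/
def AlgebraicOver {Ω : Type*} {n : ℕ} (G : Set (Equiv.Perm Ω)) (a : Ω)
    (c : Set (Fin n → Ω)) : Prop :=
  Set.Finite {b : Ω | ∃ g ∈ G, sAct g c = c ∧ b = g a}

/-- `B` is dense: for every `a ∈ Ω` there are `c₁,…,c_k ∈ B` whose joint stabiliser
is contained in the stabiliser of `a`. -/
def DenseClasses {Ω : Type*} {n : ℕ} (G : Set (Equiv.Perm Ω))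
    (B : Set (Set (Fin n → Ω))) : Prop :=
  ∀ a : Ω, ∃ (k : ℕ) (cc : Fin k → Set (Fin n → Ω)),
    (∀ i, cc i ∈ B) ∧ ∀ g ∈ G, (∀ i, sAct g (cc i) = cc i) → g a = a

/-- The induced action of `G` on `B` is without algebraicity. -/
def NoAlgOn {Ω : Type*} {n : ℕ} (G : Set (Equiv.Perm Ω))
    (B : Set (Set (Fin n → Ω))) : Prop :=
  ∀ (m : ℕ) (cc : Fin m → Set (Fin n → Ω)) (c : Set (Fin n → Ω)),
    (∀ i, cc i ∈ B) → c ∈ B →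
    Set.Finite {c' | ∃ g ∈ G, (∀ i, sAct g (cc i) = cc i) ∧ c' = sAct g c} →
    ∃ i, c = cc i

/-- Codes for structures on `ℕ` in the countable relational language whose `i`-th
relation symbol has arity `a i`. -/
abbrev Codes (a : ℕ → ℕ) := ∀ i : ℕ, (Fin (a i) → ℕ) → Bool

/-- The product topology on the space of codes (`Bool` discrete), turning it into
a Polish space. -/
def XTop (a : ℕ → ℕ) : TopologicalSpace (Codes a) :=
  @Pi.topologicalSpace _ _ (fun _ => @Pi.topologicalSpace _ _ (fun _ => ⊥))

/-- The automorphisms of the structure coded by `x`: permutations of `ℕ`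
preserving each relation and its complement. -/
def AutX {a : ℕ → ℕ} (x : Codes a) : Set (Equiv.Perm ℕ) :=
  {g | ∀ (i : ℕ) (t : Fin (a i) → ℕ), x i (fun j => g (t j)) = x i t}

/-- The structure coded by `x` is ω-categorical. -/
def OmegaCatX {a : ℕ → ℕ} (x : Codes a) : Prop := Oligo (AutX x)

/-- `x` and `y` are fo-bi-definable: some bijection of `ℕ` conjugates the
automorphism group of `x` onto that of `y`. -/
def FoBiDef {a : ℕ → ℕ} (x y : Codes a) : Prop :=
  ∃ θ : Equiv.Perm ℕ,
    AutX y = (fun g : Equiv.Perm ℕ => θ.symm.trans (g.trans θ)) '' AutX x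

namespace Smooth


variable (c : ℕ → ℕ) (trunc : ℕ → ℕ → Prop)

abbrev RelFam := ∀ k : ℕ, (Fin (c k) → ℕ) → Prop

def CE0 (A B : RelFam c) (n : ℕ) (u w : Fin n → ℕ) : Prop :=
  (∀ i j, u i = u j ↔ w i = w j) ∧
  ∀ k : ℕ, trunc k n → ∀ τ : Fin (c k) → Fin n, (A k (u ∘ τ) ↔ B k (w ∘ τ))

def CEm (A B : RelFam c) : ℕ → (n : ℕ) → (Fin n → ℕ) → (Fin n → ℕ) → Prop
  | 0, n, u, w => CE0 c trunc A B n u w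
  | m+1, n, u, w => CE0 c trunc A B n u w
      ∧ (∀ b, ∃ b', CEm A B m (n+1) (Fin.snoc u b) (Fin.snoc w b'))
      ∧ (∀ b', ∃ b, CEm A B m (n+1) (Fin.snoc u b) (Fin.snoc w b'))

def CEinf (A B : RelFam c) (n : ℕ) (u w : Fin n → ℕ) : Prop :=
  ∀ m, CEm c trunc A B m n u w

def Pres (A : RelFam c) : Set (Equiv.Perm ℕ) :=
  {g | ∀ k t, A k (tAct g t) ↔ A k t}

variable {c trunc}
variable {A B C : RelFam c}

lemma CE0_of_CEm {m n u w} (h : CEm c trunc A B m n u w) : CE0 c trunc A B n u w := by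
  cases m with
  | zero => exact h
  | succ m => exact h.1

lemma CEm_succ_imp : ∀ m n u w, CEm c trunc A B (m+1) n u w → CEm c trunc A B m n u w := by
  intro m
  induction m with
  | zero => intro n u w h; exact h.1
  | succ m ih =>
    intro n u w h
    exact ⟨h.1, fun b => (h.2.1 b).imp (fun b' hb => ih _ _ _ hb),
      fun b' => (h.2.2 b').imp (fun b hb => ih _ _ _ hb)⟩

lemma CEm_le {m m'} (hle : m ≤ m') {n u w} (h : CEm c trunc A B m' n u w) :
    CEm c trunc A B m n u w := by
  induction m' with
  | zero => obtain rfl : m = 0 := by omega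
            exact h
  | succ m' ih =>
    rcases Nat.eq_or_lt_of_le hle with rfl | hlt
    · exact h
    · exact ih (by omega) (CEm_succ_imp _ _ _ _ h)

lemma CEm_symm : ∀ m n u w, CEm c trunc A B m n u w → CEm c trunc B A m n w u := by
  intro m
  induction m with
  | zero => exact fun n u w h => ⟨fun i j => (h.1 i j).symm, fun k hk τ => (h.2 k hk τ).symm⟩
  | succ m ih =>
    intro n u w h
    exact ⟨⟨fun i j => (h.1.1 i j).symm, fun k hk τ => (h.1.2 k hk τ).symm⟩,
      fun b => (h.2.2 b).imp (fun b' hb => ih _ _ _ hb),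
      fun b' => (h.2.1 b').imp (fun b hb => ih _ _ _ hb)⟩

lemma tAct_snoc (g : Equiv.Perm ℕ) {n} (w : Fin n → ℕ) (b : ℕ) :
    tAct g (Fin.snoc w b) = Fin.snoc (tAct g w) (g b) := by
  funext i
  refine Fin.lastCases ?_ ?_ i
  · simp [tAct]
  · intro i; simp [tAct]

lemma tAct_comp (g : Equiv.Perm ℕ) {n m} (w : Fin n → ℕ) (τ : Fin m → Fin n) :
    (tAct g w) ∘ τ = tAct g (w ∘ τ) := rfl

lemma CEm_act_right {g : Equiv.Perm ℕ} (hg : g ∈ Pres c B) :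
    ∀ m n u w, CEm c trunc A B m n u w → CEm c trunc A B m n u (tAct g w) := by
  have base : ∀ n (u w : Fin n → ℕ), CE0 c trunc A B n u w → CE0 c trunc A B n u (tAct g w) := by
    intro n u w h
    constructor
    · intro i j
      rw [h.1 i j]
      exact ⟨fun hh => by simp [tAct, hh], fun hh => g.injective hh⟩
    · intro k hk τ
      rw [tAct_comp, hg k (w ∘ τ)]
      exact h.2 k hk τ
  intro m
  induction m with
  | zero => exact fun n u w h => base n u w h
  | succ m ih =>
    intro n u w h
    refine ⟨base n u w h.1, ?_, ?_⟩
    · intro b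
      obtain ⟨b', hb⟩ := h.2.1 b
      exact ⟨g b', by rw [← tAct_snoc]; exact ih _ _ _ hb⟩
    · intro b'
      obtain ⟨b, hb⟩ := h.2.2 (g.symm b')
      refine ⟨b, ?_⟩
      have := ih _ _ _ hb
      rwa [tAct_snoc, Equiv.apply_symm_apply] at this

variable {c : ℕ → ℕ} {trunc : ℕ → ℕ → Prop} {A B : RelFam c}

lemma CEm_transfer {θ : Equiv.Perm ℕ} (htr : ∀ k t, A k t ↔ B k (tAct θ t)) :
    ∀ m n u, CEm c trunc A B m n u (tAct θ u) := by
  have base : ∀ n (u : Fin n → ℕ), CE0 c trunc A B n u (tAct θ u) := by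
    intro n u
    constructor
    · intro i j
      exact ⟨fun h => by simp [tAct, h], fun h => θ.injective h⟩
    · intro k _ τ
      rw [tAct_comp]
      exact htr k (u ∘ τ)
  intro m
  induction m with
  | zero => exact fun n u => base n u
  | succ m ih =>
    intro n u
    refine ⟨base n u, ?_, ?_⟩
    · intro b
      exact ⟨θ b, by rw [← tAct_snoc]; exact ih _ _⟩
    · intro b'
      refine ⟨θ.symm b', ?_⟩
      have := ih (n+1) (Fin.snoc u (θ.symm b'))
      rwa [tAct_snoc, Equiv.apply_symm_apply] at this

lemma CEm_extend (G : Set (Equiv.Perm ℕ))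
    (hG : G ⊆ Pres c B) (hid : Equiv.refl ℕ ∈ G) (hfin : Oligo G)
    {n : ℕ} {u w : Fin n → ℕ} (h : CEinf c trunc A B n u w) (b : ℕ) :
    ∃ b', CEinf c trunc A B (n+1) (Fin.snoc u b) (Fin.snoc w b') := by
  classical
  set T : ℕ → Set (Fin (n+1) → ℕ) :=
    fun m => {w' | CEm c trunc A B m (n+1) (Fin.snoc u b) w'} with hT
  set Orb : Set (Set (Fin (n+1) → ℕ)) :=
    {o | ∃ t : Fin (n+1) → ℕ, o = {s | ∃ g ∈ G, s = tAct g t}} with hOrb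
  have hOrbFin : Orb.Finite := hfin (n+1)
  set φ : ℕ → Set (Set (Fin (n+1) → ℕ)) := fun m => {o | o ∈ Orb ∧ o ⊆ T m} with hφ
  have hTanti : ∀ {m m'}, m ≤ m' → T m' ⊆ T m := by
    intro m m' hle w' hw'
    exact CEm_le hle hw'
  have hφanti : ∀ {m m'}, m ≤ m' → φ m' ⊆ φ m := by
    intro m m' hle o ho
    exact ⟨ho.1, ho.2.trans (hTanti hle)⟩
  have hTorb : ∀ m w', w' ∈ T m → ∀ g ∈ G, tAct g w' ∈ T m := by
    intro m w' hw' g hg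
    exact CEm_act_right (hG hg) m _ _ _ hw'
  have hTcup : ∀ m, T m = ⋃₀ φ m := by
    intro m
    apply Set.Subset.antisymm
    · intro w' hw'
      refine ⟨{s | ∃ g ∈ G, s = tAct g w'}, ⟨⟨w', rfl⟩, ?_⟩, ⟨Equiv.refl ℕ, hid, rfl⟩⟩
      rintro s ⟨g, hg, rfl⟩
      exact hTorb m w' hw' g hg
    · rintro w' ⟨o, ho, hw'⟩
      exact ho.2 hw'
  set φinf : Set (Set (Fin (n+1) → ℕ)) := ⋂ m, φ m with hφinf
  have key : ∀ o ∈ Orb \ φinf, ∃ m, o ∉ φ m := by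
    intro o ho
    have := ho.2
    simp only [hφinf, Set.mem_iInter, not_forall] at this
    exact this
  choose mo hmo using key
  obtain ⟨M, hM⟩ : ∃ M, ∀ o (ho : o ∈ Orb \ φinf), mo o ho ≤ M := by
    by_cases hne : (Orb \ φinf).Nonempty
    · have hfin2 : ((Orb \ φinf).Finite) := hOrbFin.subset Set.diff_subset
      -- bound via finite image
      have : ∃ M, ∀ x ∈ (fun (p : {o // o ∈ Orb \ φinf}) => mo p.1 p.2) '' Set.univ, x ≤ M := by
        have hfs : ((fun (p : {o // o ∈ Orb \ φinf}) => mo p.1 p.2) '' Set.univ).Finite := by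
          haveI : Finite {o // o ∈ Orb \ φinf} := hfin2.to_subtype
          exact Set.toFinite _
        obtain ⟨M, hM⟩ := hfs.bddAbove
        exact ⟨M, fun x hx => hM hx⟩
      obtain ⟨M, hM⟩ := this
      exact ⟨M, fun o ho => hM _ ⟨⟨o, ho⟩, Set.mem_univ _, rfl⟩⟩
    · refine ⟨0, fun o ho => absurd (⟨o, ho⟩ : (Orb \ φinf).Nonempty) hne⟩
  have hφM : ∀ m, M ≤ m → φ m = φinf := by
    intro m hm
    apply Set.Subset.antisymm
    · intro o ho
      by_contra hno
      have hod : o ∈ Orb \ φinf := ⟨ho.1, hno⟩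
      have : o ∉ φ (mo o hod) := hmo o hod
      exact this (hφanti (le_trans (hM o hod) hm) ho)
    · intro o ho
      exact Set.mem_iInter.mp ho m
  obtain ⟨b', hb'⟩ := (h (M+1)).2.1 b
  refine ⟨b', fun m => ?_⟩
  rcases le_total m M with hle | hle
  · exact CEm_le hle hb'
  · have : Fin.snoc w b' ∈ T M := hb'
    have hTm : T m = T M := by
      rw [hTcup, hTcup, hφM M le_rfl, hφM m hle]
    rw [show CEm c trunc A B m (n+1) (Fin.snoc u b) (Fin.snoc w b') ↔ _ ∈ T m from Iff.rfl, hTm]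
    exact this

section BF
variable (c trunc)
variable (A B)
variable (hR : ∀ (n : ℕ) (u w : Fin n → ℕ), CEinf c trunc A B n u w →
    ∀ b, ∃ b', CEinf c trunc A B (n+1) (Fin.snoc u b) (Fin.snoc w b'))
variable (hL : ∀ (n : ℕ) (u w : Fin n → ℕ), CEinf c trunc A B n u w →
    ∀ b', ∃ b, CEinf c trunc A B (n+1) (Fin.snoc u b) (Fin.snoc w b'))
variable {n₀ : ℕ} (u w : Fin n₀ → ℕ) (h : CEinf c trunc A B n₀ u w)

noncomputable def step : ∀ k : ℕ,
    {p : (Fin (n₀+2*k) → ℕ) × (Fin (n₀+2*k) → ℕ) // CEinf c trunc A B (n₀+2*k) p.1 p.2}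
  | 0 => ⟨(u, w), h⟩
  | k+1 =>
    ⟨(Fin.snoc (Fin.snoc (step k).1.1 (k : ℕ))
        (Classical.choose (hL _ _ _
          (Classical.choose_spec (hR _ _ _ (step k).2 k)) k)),
      Fin.snoc (Fin.snoc (step k).1.2 (Classical.choose (hR _ _ _ (step k).2 k))) (k : ℕ)),
     Classical.choose_spec (hL _ _ _ (Classical.choose_spec (hR _ _ _ (step k).2 k)) k)⟩

lemma step_compat (k : ℕ) (i : Fin (n₀+2*k)) :
    (step c trunc A B hR hL u w h (k+1)).1.1 (Fin.castLE (by omega) i)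
      = (step c trunc A B hR hL u w h k).1.1 i ∧
    (step c trunc A B hR hL u w h (k+1)).1.2 (Fin.castLE (by omega) i)
      = (step c trunc A B hR hL u w h k).1.2 i := by
  have e1 : (Fin.castLE (show n₀+2*k ≤ n₀+2*(k+1) by omega) i)
      = Fin.castSucc (Fin.castSucc i) := rfl
  constructor <;>
  · simp only [step]
    rw [e1, Fin.snoc_castSucc, Fin.snoc_castSucc]

lemma step_covL (k : ℕ) :
    ∃ i, (step c trunc A B hR hL u w h (k+1)).1.1 i = k := by
  refine ⟨Fin.castSucc (Fin.last (n₀+2*k)), ?_⟩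
  simp only [step]
  rw [Fin.snoc_castSucc]
  exact Fin.snoc_last _ _

lemma step_covR (k : ℕ) :
    ∃ i, (step c trunc A B hR hL u w h (k+1)).1.2 i = k := by
  refine ⟨Fin.last (n₀+2*k+1), ?_⟩
  simp only [step]
  exact Fin.snoc_last _ _

end BF



section BF2

lemma backforth
    (htrunc : ∀ k, ∃ N, ∀ n, N ≤ n → trunc k n)
    (hR : ∀ (n : ℕ) (u w : Fin n → ℕ), CEinf c trunc A B n u w →
      ∀ b, ∃ b', CEinf c trunc A B (n+1) (Fin.snoc u b) (Fin.snoc w b'))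
    (hL : ∀ (n : ℕ) (u w : Fin n → ℕ), CEinf c trunc A B n u w →
      ∀ b', ∃ b, CEinf c trunc A B (n+1) (Fin.snoc u b) (Fin.snoc w b'))
    {n₀ : ℕ} {u w : Fin n₀ → ℕ} (h : CEinf c trunc A B n₀ u w) :
    ∃ θ : Equiv.Perm ℕ, tAct θ u = w ∧
      ∀ k (t : Fin (c k) → ℕ), (A k t ↔ B k (tAct θ t)) := by
  classical
  set s : ∀ k : ℕ, Fin (n₀+2*k) → ℕ := fun k => (step c trunc A B hR hL u w h k).1.1 with hs
  set t : ∀ k : ℕ, Fin (n₀+2*k) → ℕ := fun k => (step c trunc A B hR hL u w h k).1.2 with ht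
  have hst : ∀ k, CEinf c trunc A B (n₀+2*k) (s k) (t k) :=
    fun k => (step c trunc A B hR hL u w h k).2
  have compatLE : ∀ (k k' : ℕ) (hkk : k ≤ k') (i : Fin (n₀+2*k)),
      s k' (Fin.castLE (by omega) i) = s k i ∧ t k' (Fin.castLE (by omega) i) = t k i := by
    intro k k' hkk
    induction k', hkk using Nat.le_induction with
    | base =>
      intro i
      constructor <;> rfl
    | succ k' hk ih =>
      intro i
      have e : (Fin.castLE (show n₀+2*k ≤ n₀+2*(k'+1) by omega) i)
          = Fin.castLE (show n₀+2*k' ≤ n₀+2*(k'+1) by omega)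
              (Fin.castLE (show n₀+2*k ≤ n₀+2*k' by omega) i) := rfl
      rw [e]
      obtain ⟨h1, h2⟩ := step_compat c trunc A B hR hL u w h k'
        (Fin.castLE (show n₀+2*k ≤ n₀+2*k' by omega) i)
      exact ⟨h1.trans (ih i).1, h2.trans (ih i).2⟩
  have covL : ∀ v : ℕ, ∀ k, v < k → ∃ i : Fin (n₀+2*k), s k i = v := by
    intro v k hvk
    obtain ⟨i, hi⟩ := step_covL c trunc A B hR hL u w h v
    refine ⟨Fin.castLE (by omega) i, ?_⟩
    rw [(compatLE (v+1) k (by omega) i).1]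
    exact hi
  have covR : ∀ v : ℕ, ∀ k, v < k → ∃ i : Fin (n₀+2*k), t k i = v := by
    intro v k hvk
    obtain ⟨i, hi⟩ := step_covR c trunc A B hR hL u w h v
    refine ⟨Fin.castLE (by omega) i, ?_⟩
    rw [(compatLE (v+1) k (by omega) i).2]
    exact hi
  set R : ℕ → ℕ → Prop := fun cL cR => ∃ k i, s k i = cL ∧ t k i = cR with hR2
  have func1 : ∀ cL d d', R cL d → R cL d' → d = d' := by
    rintro cL d d' ⟨k, i, hsk, htk⟩ ⟨k', i', hsk', htk'⟩
    have h1 := compatLE k (max k k') (le_max_left _ _) i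
    have h2 := compatLE k' (max k k') (le_max_right _ _) i'
    have heq : s (max k k') (Fin.castLE (by omega) i)
        = s (max k k') (Fin.castLE (by omega) i') := by rw [h1.1, h2.1, hsk, hsk']
    have := ((CE0_of_CEm (hst (max k k') 0)).1 _ _).mp heq
    rw [h1.2, h2.2, htk, htk'] at this
    exact this
  have func2 : ∀ cL cL' d, R cL d → R cL' d → cL = cL' := by
    rintro cL cL' d ⟨k, i, hsk, htk⟩ ⟨k', i', hsk', htk'⟩
    have h1 := compatLE k (max k k') (le_max_left _ _) i
    have h2 := compatLE k' (max k k') (le_max_right _ _) i'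
    have heq : t (max k k') (Fin.castLE (by omega) i)
        = t (max k k') (Fin.castLE (by omega) i') := by rw [h1.2, h2.2, htk, htk']
    have := ((CE0_of_CEm (hst (max k k') 0)).1 _ _).mpr heq
    rw [h1.1, h2.1, hsk, hsk'] at this
    exact this
  have totL : ∀ cL, ∃ d, R cL d := by
    intro cL
    obtain ⟨i, hi⟩ := covL cL (cL+1) (by omega)
    exact ⟨t (cL+1) i, cL+1, i, hi, rfl⟩
  have totR : ∀ d, ∃ cL, R cL d := by
    intro d
    obtain ⟨i, hi⟩ := covR d (d+1) (by omega)
    exact ⟨s (d+1) i, d+1, i, rfl, hi⟩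
  set θf : ℕ → ℕ := fun cL => Classical.choose (totL cL) with hθf
  set θi : ℕ → ℕ := fun d => Classical.choose (totR d) with hθi
  have hθfs : ∀ cL, R cL (θf cL) := fun cL => Classical.choose_spec (totL cL)
  have hθis : ∀ d, R (θi d) d := fun d => Classical.choose_spec (totR d)
  set θ : Equiv.Perm ℕ := ⟨θf, θi,
    fun cL => func2 _ _ _ (hθis (θf cL)) (hθfs cL),
    fun d => func1 _ _ _ (hθfs (θi d)) (hθis d)⟩ with hθ
  have hθst : ∀ k i, θ (s k i) = t k i := by
    intro k i
    exact func1 _ _ _ (hθfs (s k i)) ⟨k, i, rfl, rfl⟩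
  refine ⟨θ, ?_, ?_⟩
  · funext i
    have : θ (s 0 i) = t 0 i := hθst 0 i
    exact this
  · intro k t₀
    obtain ⟨N, hN⟩ := htrunc k
    set V : ℕ := Finset.sup Finset.univ (fun j => t₀ j) with hV
    set K : ℕ := V + 1 + N with hK
    have hcov : ∀ j : Fin (c k), ∃ i : Fin (n₀+2*K), s K i = t₀ j := by
      intro j
      apply covL
      have : t₀ j ≤ V := Finset.le_sup (Finset.mem_univ j)
      omega
    choose τ hτ using hcov
    have htrK : trunc k (n₀+2*K) := hN _ (by omega)
    have hiff := (CE0_of_CEm (hst K 0)).2 k htrK τ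
    have e1 : s K ∘ τ = t₀ := funext hτ
    have e2 : t K ∘ τ = tAct θ t₀ := by
      funext j
      show t K (τ j) = θ (t₀ j)
      rw [← hτ j, hθst]
    rw [e1, e2] at hiff
    exact hiff
end BF2


end Smooth
namespace Smooth

variable {a : ℕ → ℕ}

/-- The relation family of a code. -/
def famX (x : Codes a) : RelFam a := fun k t => x k t = true

/-- trivial truncation -/
def TT : ℕ → ℕ → Prop := fun _ _ => True

/-- truncation by arity index -/
def LE : ℕ → ℕ → Prop := fun k n => k ≤ n

lemma id_mem_aut (x : Codes a) : Equiv.refl ℕ ∈ AutX x := fun _ _ => rfl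

lemma aut_pres {x : Codes a} {g : Equiv.Perm ℕ} (hg : g ∈ AutX x) :
    g ∈ Pres a (famX x) := by
  intro k t
  have := hg k t
  show x k (tAct g t) = true ↔ x k t = true
  rw [show x k (tAct g t) = x k t from this]

lemma bool_eq_of_iff {b1 b2 : Bool} (h : b1 = true ↔ b2 = true) : b1 = b2 := by
  cases b1 <;> cases b2 <;> simp_all

lemma einfX_of_aut {x : Codes a} {g : Equiv.Perm ℕ} (hg : g ∈ AutX x)
    (n : ℕ) (u : Fin n → ℕ) : CEinf a TT (famX x) (famX x) n u (tAct g u) := by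
  intro m
  exact CEm_transfer (fun k t => (aut_pres hg k t).symm) m n u

lemma pres_symm {c : ℕ → ℕ} {A : RelFam c} {g : Equiv.Perm ℕ} (hg : g ∈ Pres c A) :
    g.symm ∈ Pres c A := by
  intro k t
  have : tAct g (tAct g.symm t) = t := by
    funext i; simp [tAct]
  conv_rhs => rw [← this]
  exact (hg k (tAct g.symm t)).symm

lemma aut_of_einfX {x : Codes a} (hx : OmegaCatX x) {n : ℕ} {u v : Fin n → ℕ}
    (h : CEinf a TT (famX x) (famX x) n u v) : ∃ g ∈ AutX x, tAct g u = v := by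
  have hR : ∀ (n : ℕ) (u w : Fin n → ℕ), CEinf a TT (famX x) (famX x) n u w →
      ∀ b, ∃ b', CEinf a TT (famX x) (famX x) (n+1) (Fin.snoc u b) (Fin.snoc w b') := by
    intro n u w hc b
    exact CEm_extend (AutX x) (fun g hg => aut_pres hg) (id_mem_aut x) hx hc b
  have hL : ∀ (n : ℕ) (u w : Fin n → ℕ), CEinf a TT (famX x) (famX x) n u w →
      ∀ b', ∃ b, CEinf a TT (famX x) (famX x) (n+1) (Fin.snoc u b) (Fin.snoc w b') := by
    intro n u w hc b'
    obtain ⟨b, hb⟩ := CEm_extend (AutX x) (fun g hg => aut_pres hg) (id_mem_aut x) hx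
      (fun m => CEm_symm m n u w (hc m)) b'
    exact ⟨b, fun m => CEm_symm m (n+1) _ _ (hb m)⟩
  obtain ⟨θ, hθu, hθtr⟩ := backforth (fun k => ⟨0, fun n _ => trivial⟩) hR hL h
  refine ⟨θ, ?_, hθu⟩
  intro k t
  exact bool_eq_of_iff (hθtr k t).symm

/-- action preserves CEinf within a structure -/
lemma einfX_act_iff {x : Codes a} {g : Equiv.Perm ℕ} (hg : g ∈ AutX x)
    {n : ℕ} (s t : Fin n → ℕ) :
    CEinf a TT (famX x) (famX x) n (tAct g s) (tAct g t) ↔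
    CEinf a TT (famX x) (famX x) n s t := by
  have act2 : ∀ (g : Equiv.Perm ℕ), g ∈ Pres a (famX x) → ∀ (s t : Fin n → ℕ),
      CEinf a TT (famX x) (famX x) n s t →
      CEinf a TT (famX x) (famX x) n (tAct g s) (tAct g t) := by
    intro g hg s t h m
    have h1 := CEm_symm m n s t (h m)
    have h2 := CEm_act_right hg m n t s h1
    have h3 := CEm_symm m n t (tAct g s) h2
    exact CEm_act_right hg m n (tAct g s) t h3
  constructor
  · intro h
    have := act2 g.symm (pres_symm (aut_pres hg)) _ _ h
    have e1 : tAct g.symm (tAct g s) = s := by funext i; simp [tAct]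
    have e2 : tAct g.symm (tAct g t) = t := by funext i; simp [tAct]
    rwa [e1, e2] at this
  · exact act2 g (aut_pres hg) s t

def low (k : ℕ) : Fin k → Fin (2*k) := fun i => ⟨i.1, by omega⟩
def high (k : ℕ) : Fin k → Fin (2*k) := fun i => ⟨k + i.1, by omega⟩

/-- The family of ∞-equivalence relations of `x`, as a relation family. -/
def famE (x : Codes a) : RelFam (fun k => 2*k) :=
  fun k w => CEinf a TT (famX x) (famX x) k (w ∘ low k) (w ∘ high k)

def CPair {k : ℕ} (s t : Fin k → ℕ) : Fin (2*k) → ℕ :=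
  fun i => if h : i.1 < k then s ⟨i.1, h⟩ else t ⟨i.1 - k, by omega⟩

lemma CPair_low {k : ℕ} (s t : Fin k → ℕ) : CPair s t ∘ low k = s := by
  funext i
  simp only [CPair, low, Function.comp_apply]
  exact dif_pos i.2

lemma CPair_high {k : ℕ} (s t : Fin k → ℕ) : CPair s t ∘ high k = t := by
  funext i
  simp only [CPair, high, Function.comp_apply]
  refine (dif_neg (show ¬ (k + i.1 < k) by omega)).trans ?_
  congr 1
  exact Fin.ext (by simp)

lemma tAct_low (g : Equiv.Perm ℕ) {k : ℕ} (w : Fin (2*k) → ℕ) :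
    tAct g w ∘ low k = tAct g (w ∘ low k) := rfl

lemma tAct_high (g : Equiv.Perm ℕ) {k : ℕ} (w : Fin (2*k) → ℕ) :
    tAct g w ∘ high k = tAct g (w ∘ high k) := rfl

lemma aut_presE {y : Codes a} {g : Equiv.Perm ℕ} (hg : g ∈ AutX y) :
    g ∈ Pres (fun k => 2*k) (famE y) := by
  intro k w
  show CEinf a TT (famX y) (famX y) k (tAct g w ∘ low k) (tAct g w ∘ high k) ↔ _
  rw [tAct_low, tAct_high]
  exact einfX_act_iff hg _ _

end Smooth
namespace Smooth

variable {a : ℕ → ℕ}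

/-- the empty tuple -/
def e0 : Fin 0 → ℕ := Fin.elim0

lemma tAct_e0 (g : Equiv.Perm ℕ) : tAct g e0 = e0 := by
  funext i; exact i.elim0

def conjP (θ : Equiv.Perm ℕ) (g : Equiv.Perm ℕ) : Equiv.Perm ℕ :=
  θ.symm.trans (g.trans θ)

lemma conjP_apply (θ g : Equiv.Perm ℕ) (n : ℕ) : conjP θ g n = θ (g (θ.symm n)) := rfl

lemma conjP_inj (θ : Equiv.Perm ℕ) : Function.Injective (conjP θ) := by
  intro g g' h
  ext n
  have := congrArg (fun e : Equiv.Perm ℕ => θ.symm (e (θ n))) h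
  simpa [conjP_apply] using this

/-- transfer of the type-equivalences under a conjugating permutation -/
lemma transfer_of_fobidef {x y : Codes a} (hx : OmegaCatX x) (hy : OmegaCatX y)
    {θ : Equiv.Perm ℕ} (hθ : AutX y = (fun g : Equiv.Perm ℕ => θ.symm.trans (g.trans θ)) '' AutX x)
    {k : ℕ} (s t : Fin k → ℕ) :
    CEinf a TT (famX x) (famX x) k s t ↔
    CEinf a TT (famX y) (famX y) k (tAct θ s) (tAct θ t) := by
  have mem_iff : ∀ g : Equiv.Perm ℕ, g ∈ AutX x ↔ conjP θ g ∈ AutX y := by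
    intro g
    constructor
    · intro hg
      rw [hθ]
      exact ⟨g, hg, rfl⟩
    · intro hg
      rw [hθ] at hg
      obtain ⟨g', hg', he⟩ := hg
      have : g' = g := conjP_inj θ he
      rwa [← this]
  constructor
  · intro h
    obtain ⟨g, hg, hgs⟩ := aut_of_einfX hx h
    have h2 := einfX_of_aut ((mem_iff g).mp hg) k (tAct θ s)
    have e : tAct (conjP θ g) (tAct θ s) = tAct θ t := by
      funext i
      simp only [tAct, conjP_apply, Equiv.symm_apply_apply]
      rw [show g (s i) = t i from congrFun hgs i]
    rwa [e] at h2
  · intro h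
    obtain ⟨hh, hmem, hhs⟩ := aut_of_einfX hy h
    set g : Equiv.Perm ℕ := θ.trans (hh.trans θ.symm) with hgdef
    have hcg : conjP θ g = hh := by
      ext n
      simp [conjP_apply, hgdef]
    have hgx : g ∈ AutX x := (mem_iff g).mpr (by rwa [hcg])
    have e : tAct g s = t := by
      funext i
      have := congrFun hhs i
      simp only [tAct] at this ⊢
      simp only [hgdef, Equiv.trans_apply]
      rw [this]
      exact θ.symm_apply_apply _
    have := einfX_of_aut hgx k s
    rwa [e] at this

lemma key_iff {x y : Codes a} (hx : OmegaCatX x) (hy : OmegaCatX y) :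
    FoBiDef x y ↔ CEinf (fun k => 2*k) LE (famE x) (famE y) 0 e0 e0 := by
  constructor
  · rintro ⟨θ, hθ⟩
    have htrE : ∀ k (w : Fin (2*k) → ℕ), famE x k w ↔ famE y k (tAct θ w) := by
      intro k w
      show _ ↔ CEinf a TT (famX y) (famX y) k (tAct θ w ∘ low k) (tAct θ w ∘ high k)
      rw [tAct_low, tAct_high]
      exact transfer_of_fobidef hx hy hθ _ _
    have := fun m => CEm_transfer (trunc := LE) htrE m 0 e0
    rwa [tAct_e0] at this
  · intro h
    have hR : ∀ (n : ℕ) (u w : Fin n → ℕ),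
        CEinf (fun k => 2*k) LE (famE x) (famE y) n u w →
        ∀ b, ∃ b', CEinf (fun k => 2*k) LE (famE x) (famE y) (n+1)
          (Fin.snoc u b) (Fin.snoc w b') := by
      intro n u w hc b
      exact CEm_extend (AutX y) (fun g hg => aut_presE hg) (id_mem_aut y) hy hc b
    have hL : ∀ (n : ℕ) (u w : Fin n → ℕ),
        CEinf (fun k => 2*k) LE (famE x) (famE y) n u w →
        ∀ b', ∃ b, CEinf (fun k => 2*k) LE (famE x) (famE y) (n+1)
          (Fin.snoc u b) (Fin.snoc w b') := by
      intro n u w hc b'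
      obtain ⟨b, hb⟩ := CEm_extend (AutX x) (fun g hg => aut_presE hg) (id_mem_aut x) hx
        (fun m => CEm_symm m n u w (hc m)) b'
      exact ⟨b, fun m => CEm_symm m (n+1) _ _ (hb m)⟩
    obtain ⟨θ, -, htr⟩ := backforth (fun k => ⟨k, fun n hn => hn⟩) hR hL h
    -- htr : ∀ k w, famE x k w ↔ famE y k (tAct θ w)
    have transfer : ∀ (k : ℕ) (s t : Fin k → ℕ),
        CEinf a TT (famX x) (famX x) k s t ↔
        CEinf a TT (famX y) (famX y) k (tAct θ s) (tAct θ t) := by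
      intro k s t
      have := htr k (CPair s t)
      show CEinf a TT (famX x) (famX x) k s t ↔ _
      rw [show CEinf a TT (famX x) (famX x) k s t
            = famE x k (CPair s t) by rw [famE, CPair_low, CPair_high]]
      rw [this]
      show CEinf a TT (famX y) (famX y) k (tAct θ (CPair s t) ∘ low k)
          (tAct θ (CPair s t) ∘ high k) ↔ _
      rw [tAct_low, tAct_high, CPair_low, CPair_high]
    refine ⟨θ, ?_⟩
    apply Set.eq_of_subset_of_subset
    · -- AutX y ⊆ image
      intro hh hmem
      set g : Equiv.Perm ℕ := θ.trans (hh.trans θ.symm) with hgdef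
      have hcg : θ.symm.trans (g.trans θ) = hh := by
        ext n; simp [hgdef]
      refine ⟨g, ?_, hcg⟩
      -- g ∈ AutX x
      intro r t
      have h1 : CEinf a TT (famX y) (famX y) (a r) (tAct hh (tAct θ t)) (tAct θ t) := by
        intro m
        exact CEm_symm m _ _ _ (einfX_of_aut hmem (a r) (tAct θ t) m)
      have e1 : tAct θ (tAct g t) = tAct hh (tAct θ t) := by
        funext i; simp [tAct, hgdef]
      have h2 : CEinf a TT (famX x) (famX x) (a r) (tAct g t) t := by
        rw [transfer (a r) (tAct g t) t, e1]
        exact h1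
      have h3 := (CE0_of_CEm (h2 0)).2 r trivial id
      rw [Function.comp_id, Function.comp_id] at h3
      exact bool_eq_of_iff h3
    · rintro hh ⟨g, hg, rfl⟩
      -- conj g ∈ AutX y
      intro r t
      set u0 : Fin (a r) → ℕ := tAct θ.symm t with hu0
      have h1 : CEinf a TT (famX x) (famX x) (a r) (tAct g u0) u0 := by
        intro m
        exact CEm_symm m _ _ _ (einfX_of_aut hg (a r) u0 m)
      have h2 := (transfer (a r) (tAct g u0) u0).mp h1
      have e1 : tAct θ u0 = t := by
        funext i; simp [tAct, hu0]
      have e2 : tAct θ (tAct g u0) = tAct (θ.symm.trans (g.trans θ)) t := by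
        funext i; simp [tAct, hu0]
      rw [e1, e2] at h2
      have h3 := (CE0_of_CEm (h2 0)).2 r trivial id
      rw [Function.comp_id, Function.comp_id] at h3
      exact bool_eq_of_iff h3

end Smooth
namespace Smooth

/-- atomic type space -/
def TS0 (n : ℕ) : Type :=
  (Fin n → Fin n → Prop) × ((k : Fin (n+1)) → (Fin (2*(k:ℕ)) → Fin n) → Prop)

/-- type spaces -/
def TS : ℕ → ℕ → Type
  | 0, n => TS0 n
  | m+1, n => TS0 n × Set (TS m (n+1))

instance finite_TS0 (n : ℕ) : Finite (TS0 n) := by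
  unfold TS0; infer_instance

instance finite_TS : ∀ m n, Finite (TS m n) := by
  intro m
  induction m with
  | zero => intro n; show Finite (TS0 n); infer_instance
  | succ m ih =>
    intro n
    show Finite (TS0 n × Set (TS m (n+1)))
    have := ih (n+1)
    infer_instance

def tp0 (A : RelFam (fun k => 2*k)) (n : ℕ) (u : Fin n → ℕ) : TS0 n :=
  (fun i j => u i = u j, fun k τ => A (k:ℕ) (u ∘ τ))

def tp (A : RelFam (fun k => 2*k)) : (m : ℕ) → (n : ℕ) → (Fin n → ℕ) → TS m n
  | 0, n, u => tp0 A n u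
  | m+1, n, u => (tp0 A n u, {d | ∃ b, d = tp A m (n+1) (Fin.snoc u b)})

lemma tp0_eq_iff {A B : RelFam (fun k => 2*k)} {n : ℕ} {u w : Fin n → ℕ} :
    tp0 A n u = tp0 B n w ↔ CE0 (fun k => 2*k) LE A B n u w := by
  rw [show (tp0 A n u = tp0 B n w) ↔
      ((tp0 A n u).1 = (tp0 B n w).1 ∧ (tp0 A n u).2 = (tp0 B n w).2) from Prod.ext_iff]
  constructor
  · rintro ⟨h1, h2⟩
    constructor
    · intro i j
      rw [← eq_iff_iff]
      exact congrFun (congrFun h1 i) j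
    · intro k hk τ
      rw [← eq_iff_iff]
      have hk' : k ≤ n := hk
      have := congrFun (congrFun h2 ⟨k, by omega⟩) τ
      exact this
  · rintro ⟨h1, h2⟩
    constructor
    · funext i j
      rw [eq_iff_iff]
      exact h1 i j
    · funext k τ
      rw [eq_iff_iff]
      exact h2 (k:ℕ) (by have := k.2; show (k:ℕ) ≤ n; omega) τ

lemma tp_eq_iff {A B : RelFam (fun k => 2*k)} :
    ∀ (m n : ℕ) (u w : Fin n → ℕ),
      tp A m n u = tp B m n w ↔ CEm (fun k => 2*k) LE A B m n u w := by
  intro m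
  induction m with
  | zero => intro n u w; exact tp0_eq_iff
  | succ m ih =>
    intro n u w
    show ((tp0 A n u, {d | ∃ b, d = tp A m (n+1) (Fin.snoc u b)}) :
        TS0 n × Set (TS m (n+1))) = (tp0 B n w, {d | ∃ b, d = tp B m (n+1) (Fin.snoc w b)}) ↔ _
    rw [Prod.ext_iff]
    constructor
    · rintro ⟨h1, h2⟩
      have h2' : {d | ∃ b, d = tp A m (n+1) (Fin.snoc u b)}
          = {d | ∃ b, d = tp B m (n+1) (Fin.snoc w b)} := h2
      refine ⟨tp0_eq_iff.mp h1, ?_, ?_⟩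
      · intro b
        have : tp A m (n+1) (Fin.snoc u b) ∈ {d | ∃ b, d = tp B m (n+1) (Fin.snoc w b)} := by
          rw [← h2']; exact ⟨b, rfl⟩
        obtain ⟨b', hb'⟩ := this
        exact ⟨b', (ih (n+1) _ _).mp hb'⟩
      · intro b'
        have : tp B m (n+1) (Fin.snoc w b') ∈ {d | ∃ b, d = tp A m (n+1) (Fin.snoc u b)} := by
          rw [h2']; exact ⟨b', rfl⟩
        obtain ⟨b, hb⟩ := this
        exact ⟨b, (ih (n+1) _ _).mp hb.symm⟩
    · rintro ⟨h1, h2, h3⟩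
      refine ⟨tp0_eq_iff.mpr h1, ?_⟩
      ext d
      constructor
      · rintro ⟨b, rfl⟩
        obtain ⟨b', hb'⟩ := h2 b
        exact ⟨b', ((ih (n+1) _ _).mpr hb')⟩
      · rintro ⟨b', rfl⟩
        obtain ⟨b, hb⟩ := h3 b'
        exact ⟨b, ((ih (n+1) _ _).mpr hb).symm⟩

end Smooth
namespace Smooth
open MeasureTheory

variable {a : ℕ → ℕ}

/-- the Borel σ-algebra on codes -/
noncomputable def MX (a : ℕ → ℕ) : MeasurableSpace (Codes a) := @borel (Codes a) (XTop a)

lemma meas_of_isOpen {S : Set (Codes a)} (h : @IsOpen _ (XTop a) S) :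
    MeasurableSet[MX a] S :=
  MeasurableSpace.measurableSet_generateFrom h

lemma isOpen_eval (r : ℕ) (t : Fin (a r) → ℕ) (b : Bool) :
    @IsOpen (Codes a) (XTop a) {x | x r t = b} := by
  have hc : Continuous (fun x : Codes a => x r t) :=
    (continuous_apply t).comp (continuous_apply r)
  have ho : IsOpen {b' : Bool | b' = b} := trivial
  exact hc.isOpen_preimage _ ho

lemma meas_eval (r : ℕ) (t : Fin (a r) → ℕ) (b : Bool) :
    MeasurableSet[MX a] {x | x r t = b} :=
  meas_of_isOpen (isOpen_eval r t b)

lemma meas_releq (r : ℕ) (s t : Fin (a r) → ℕ) :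
    MeasurableSet[MX a] {x | x r s = x r t} := by
  have : {x : Codes a | x r s = x r t} =
      ({x | x r s = true} ∩ {x | x r t = true}) ∪
      ({x | x r s = false} ∩ {x | x r t = false}) := by
    ext x
    cases h1 : x r s <;> cases h2 : x r t <;> simp [h1, h2]
  rw [this]
  exact ((meas_eval r s true).inter (meas_eval r t true)).union
    ((meas_eval r s false).inter (meas_eval r t false))

lemma meas_setOf_const (p : Prop) {α : Type*} {M : MeasurableSpace α} :
    MeasurableSet[M] {x : α | p} := by
  classical
  by_cases h : p
  · simp only [h, Set.setOf_true]; exact MeasurableSet.univ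
  · simp only [h, Set.setOf_false]; exact MeasurableSet.empty

lemma meas_iff_const {α : Type*} {M : MeasurableSpace α} {P : α → Prop}
    (hP : MeasurableSet[M] {x | P x}) (q : Prop) :
    MeasurableSet[M] {x : α | P x ↔ q} := by
  classical
  by_cases h : q
  · have : {x : α | P x ↔ q} = {x | P x} := by ext x; simp [h]
    rw [this]; exact hP
  · have : {x : α | P x ↔ q} = {x | P x}ᶜ := by ext x; simp [h]
    rw [this]; exact hP.compl

lemma meas_CE0X (n : ℕ) (u w : Fin n → ℕ) :
    MeasurableSet[MX a] {x | CE0 a TT (famX x) (famX x) n u w} := by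
  have he : {x : Codes a | CE0 a TT (famX x) (famX x) n u w} =
      {x : Codes a | (∀ i j, u i = u j ↔ w i = w j)} ∩
      ⋂ (k : ℕ), ⋂ (τ : Fin (a k) → Fin n), {x | x k (u ∘ τ) = x k (w ∘ τ)} := by
    ext x
    simp only [Set.mem_inter_iff, Set.mem_iInter, Set.mem_setOf_eq]
    constructor
    · rintro ⟨h1, h2⟩
      exact ⟨h1, fun k τ => bool_eq_of_iff (h2 k trivial τ)⟩
    · rintro ⟨h1, h2⟩
      refine ⟨h1, fun k _ τ => ?_⟩
      show x k (u ∘ τ) = true ↔ x k (w ∘ τ) = true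
      rw [h2 k τ]
  rw [he]
  exact (meas_setOf_const _).inter
    (MeasurableSet.iInter (fun k => MeasurableSet.iInter (fun τ => meas_releq k _ _)))

lemma meas_CEmX : ∀ (m n : ℕ) (u w : Fin n → ℕ),
    MeasurableSet[MX a] {x | CEm a TT (famX x) (famX x) m n u w} := by
  intro m
  induction m with
  | zero => exact fun n u w => meas_CE0X n u w
  | succ m ih =>
    intro n u w
    have he : {x : Codes a | CEm a TT (famX x) (famX x) (m+1) n u w} =
        {x | CE0 a TT (famX x) (famX x) n u w} ∩
        ((⋂ (b : ℕ), ⋃ (b' : ℕ),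
            {x | CEm a TT (famX x) (famX x) m (n+1) (Fin.snoc u b) (Fin.snoc w b')}) ∩
         (⋂ (b' : ℕ), ⋃ (b : ℕ),
            {x | CEm a TT (famX x) (famX x) m (n+1) (Fin.snoc u b) (Fin.snoc w b')})) := by
      ext x
      simp only [Set.mem_inter_iff, Set.mem_iInter, Set.mem_iUnion, Set.mem_setOf_eq]
      exact Iff.rfl
    rw [he]
    exact (meas_CE0X n u w).inter
      ((MeasurableSet.iInter (fun b => MeasurableSet.iUnion (fun b' => ih _ _ _))).inter
       (MeasurableSet.iInter (fun b' => MeasurableSet.iUnion (fun b => ih _ _ _))))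

lemma meas_CEinfX (n : ℕ) (u w : Fin n → ℕ) :
    MeasurableSet[MX a] {x | CEinf a TT (famX x) (famX x) n u w} := by
  have he : {x : Codes a | CEinf a TT (famX x) (famX x) n u w} =
      ⋂ (m : ℕ), {x | CEm a TT (famX x) (famX x) m n u w} := by
    ext x; simp [CEinf, Set.mem_iInter]
  rw [he]
  exact MeasurableSet.iInter (fun m => meas_CEmX m n u w)

lemma meas_famE (k : ℕ) (w : Fin (2*k) → ℕ) :
    MeasurableSet[MX a] {x | famE x k w} :=
  meas_CEinfX k (w ∘ low k) (w ∘ high k)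

lemma meas_tp0 (n : ℕ) (u : Fin n → ℕ) (d : TS0 n) :
    MeasurableSet[MX a] {x | tp0 (famE x) n u = d} := by
  have hiff : ∀ x : Codes a, tp0 (famE x) n u = d ↔
      ((fun i j => u i = u j) = d.1 ∧ ∀ (k : Fin (n+1)) (τ : Fin (2*(k:ℕ)) → Fin n),
        (famE x (k:ℕ) (u ∘ τ) ↔ d.2 k τ)) := by
    intro x
    rw [show (tp0 (famE x) n u = d) ↔
        ((tp0 (famE x) n u).1 = d.1 ∧ (tp0 (famE x) n u).2 = d.2) from Prod.ext_iff]
    apply and_congr Iff.rfl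
    constructor
    · intro h k τ
      rw [← congrFun (congrFun h k) τ]
      exact Iff.rfl
    · intro h
      funext k τ
      rw [show (tp0 (famE x) n u).2 k τ = famE x (k:ℕ) (u ∘ τ) from rfl, eq_iff_iff]
      exact h k τ
  have he : {x | tp0 (famE x) n u = d} =
      {x : Codes a | (fun i j => u i = u j) = d.1} ∩
      ⋂ (k : Fin (n+1)), ⋂ (τ : Fin (2*(k:ℕ)) → Fin n),
        {x | famE x (k:ℕ) (u ∘ τ) ↔ d.2 k τ} := by
    ext x
    simp only [Set.mem_inter_iff, Set.mem_iInter, Set.mem_setOf_eq, hiff x]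
  rw [he]
  exact (meas_setOf_const _).inter
    (MeasurableSet.iInter fun k => MeasurableSet.iInter fun τ =>
      meas_iff_const (meas_famE (k:ℕ) (u ∘ τ)) _)

lemma meas_tp : ∀ (m n : ℕ) (u : Fin n → ℕ) (d : TS m n),
    MeasurableSet[MX a] {x | tp (famE x) m n u = d} := by
  intro m
  induction m with
  | zero => exact fun n u d => meas_tp0 n u d
  | succ m ih =>
    intro n u d
    have he : {x : Codes a | tp (famE x) (m+1) n u = d} =
        {x : Codes a | tp0 (famE x) n u = d.1} ∩
        ⋂ (d' : TS m (n+1)),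
          {x | (∃ b : ℕ, tp (famE x) m (n+1) (Fin.snoc u b) = d') ↔ d' ∈ d.2} := by
      ext x
      simp only [Set.mem_inter_iff, Set.mem_iInter, Set.mem_setOf_eq]
      show ((tp0 (famE x) n u, {d' | ∃ b, d' = tp (famE x) m (n+1) (Fin.snoc u b)}) :
          TS0 n × Set (TS m (n+1))) = d ↔ _
      refine Prod.ext_iff.trans ?_
      constructor
      · rintro ⟨h1, h2⟩
        refine ⟨h1, fun d' => ?_⟩
        rw [← h2]
        constructor
        · rintro ⟨b, hb⟩; exact ⟨b, hb.symm⟩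
        · rintro ⟨b, hb⟩; exact ⟨b, hb.symm⟩
      · rintro ⟨h1, h2⟩
        refine ⟨h1, ?_⟩
        ext d'
        rw [Set.mem_setOf_eq, ← h2 d']
        constructor
        · rintro ⟨b, hb⟩; exact ⟨b, hb.symm⟩
        · rintro ⟨b, hb⟩; exact ⟨b, hb.symm⟩
    rw [he]
    haveI : Finite (TS m (n+1)) := finite_TS m (n+1)
    refine (meas_tp0 n u d.1).inter (MeasurableSet.iInter fun d' => ?_)
    classical
    apply meas_iff_const
    have : {x : Codes a | ∃ b : ℕ, tp (famE x) m (n+1) (Fin.snoc u b) = d'} =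
        ⋃ (b : ℕ), {x | tp (famE x) m (n+1) (Fin.snoc u b) = d'} := by
      ext x; simp [Set.mem_iUnion]
    rw [this]
    exact MeasurableSet.iUnion fun b => ih (n+1) (Fin.snoc u b) d'

end Smooth
namespace Smooth
open MeasureTheory

lemma not_countable_nat_fun : ¬ Countable (ℕ → ℕ) := by
  intro h
  obtain ⟨f, hf⟩ := exists_surjective_nat (ℕ → ℕ)
  obtain ⟨m, hm⟩ := hf (fun n => f n n + 1)
  have := congrFun hm m
  omega

end Smooth

/-- fo-bi-definability is a smooth equivalence relation on the class of
ω-categorical structures: it Borel-reduces to equality on `ℝ`. -/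
theorem foBiDefinability_smooth (a : ℕ → ℕ) :
    ∃ f : Codes a → ℝ,
      @Measurable (Codes a) ℝ (@borel (Codes a) (XTop a)) Real.measurableSpace f ∧
      ∀ x y : Codes a, OmegaCatX x → OmegaCatX y → (FoBiDef x y ↔ f x = f y) := by
  classical
  letI : MeasurableSpace (Codes a) := Smooth.MX a
  open Smooth in
  have hTSfin : ∀ m : ℕ, Countable (TS m 0) := fun m => (finite_TS m 0).to_countable
  obtain ⟨enc, encinj⟩ : ∃ enc : (m : ℕ) → Smooth.TS m 0 → ℕ,
      ∀ m, Function.Injective (enc m) := by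
    have : ∀ m : ℕ, ∃ e : Smooth.TS m 0 → ℕ, Function.Injective e := by
      intro m
      haveI := hTSfin m
      exact exists_injective_nat _
    choose enc hinj using this
    exact ⟨enc, hinj⟩
  set F : Codes a → (ℕ → ℕ) := fun x => fun m => enc m (Smooth.tp (Smooth.famE x) m 0 Smooth.e0)
    with hFdef
  have hFmeas : Measurable F := by
    apply measurable_pi_lambda
    intro m
    apply measurable_to_countable
    intro y
    have : (fun x : Codes a => enc m (Smooth.tp (Smooth.famE x) m 0 Smooth.e0)) ⁻¹'
        {enc m (Smooth.tp (Smooth.famE y) m 0 Smooth.e0)} =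
        {x : Codes a | Smooth.tp (Smooth.famE x) m 0 Smooth.e0
          = Smooth.tp (Smooth.famE y) m 0 Smooth.e0} := by
      ext x
      simp only [Set.mem_preimage, Set.mem_singleton_iff, Set.mem_setOf_eq]
      exact ⟨fun h => encinj m h, fun h => congrArg (enc m) h⟩
    rw [this]
    exact Smooth.meas_tp m 0 Smooth.e0 _
  have ncR : ¬ Countable ℝ := not_countable
  let j : (ℕ → ℕ) ≃ᵐ ℝ :=
    PolishSpace.measurableEquivOfNotCountable Smooth.not_countable_nat_fun ncR
  refine ⟨fun x => j (F x), ?_, ?_⟩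
  · exact j.measurable.comp hFmeas
  · intro x y hx hy
    rw [Smooth.key_iff hx hy]
    constructor
    · intro h
      have : F x = F y := by
        funext m
        exact congrArg (enc m) ((Smooth.tp_eq_iff m 0 Smooth.e0 Smooth.e0).mpr (h m))
      show j (F x) = j (F y)
      rw [this]
    · intro h
      have hFxy : F x = F y := j.injective h
      intro m
      exact (Smooth.tp_eq_iff m 0 Smooth.e0 Smooth.e0).mp (encinj m (congrFun hFxy m))
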